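/- Let C and D be updown categories satisfying the weak commutation condition, with eigenvalue functions ε_C and ε_D (i.e., (DU − UD)(c) = ε_C(c)·c for every object c, and similarly for D). Then the product C × D satisfies the weak commutation condition with ε(c,d) = ε_C(c) + ε_D(d). In particular: if C satisfies (DU−UD) = r·I and D satisfies (DU−UD) = s·I, then C × D satisfies (DU−UD) = (r+s)·I; and if both satisfy the linear commutation condition with slope a (ε depends linearly on rank with slope a), so does C × D. -/

import Mathlib

/-! Core definitions: updown categories (Hoffman, "Updown categories"). -/

/-- The underlying data of a (small) category equipped with an ℕ-valued rank,
finite levels (given as `Finset`s) and a distinguished rank-0 object `zero`. -/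
structure UpdownData where
  Obj : Type
  Hom : Obj → Obj → Type
  id : ∀ p : Obj, Hom p p
  comp : ∀ {p q r : Obj}, Hom p q → Hom q r → Hom p r
  id_comp : ∀ {p q : Obj} (f : Hom p q), comp (id p) f = f
  comp_id : ∀ {p q : Obj} (f : Hom p q), comp f (id q) = f
  assoc : ∀ {p q r s : Obj} (f : Hom p q) (g : Hom q r) (h : Hom r s),
    comp (comp f g) h = comp f (comp g h)
  rank : Obj → ℕ
  level : ℕ → Finset Obj
  zero : Obj

namespace UpdownData

/-- Axioms A1–A5 of an updown category. -/
structure IsUpdownCat (C : UpdownData) : Prop where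
  /-- `level n` is exactly the (finite) set of objects of rank `n` (A1). -/
  mem_level : ∀ (n : ℕ) (p : C.Obj), p ∈ C.level n ↔ C.rank p = n
  /-- A2: `zero` is the unique rank-0 object. -/
  rank_zero : C.rank C.zero = 0
  zero_unique : ∀ p : C.Obj, C.rank p = 0 → p = C.zero
  /-- A2: there is a morphism from `zero` to every object. -/
  zero_init : ∀ p : C.Obj, Nonempty (C.Hom C.zero p)
  /-- A3: hom-sets are finite. -/
  homFinite : ∀ p q : C.Obj, Finite (C.Hom p q)
  /-- A3: `Hom p q` is empty unless `rank p < rank q` or `p = q`. -/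
  hom_rank : ∀ p q : C.Obj, C.Hom p q → (C.rank p < C.rank q ∨ p = q)
  /-- A3: every endomorphism is invertible, so `Hom p p = Aut p` is a group. -/
  aut_group : ∀ (p : C.Obj) (f : C.Hom p p),
    ∃ g : C.Hom p p, C.comp f g = C.id p ∧ C.comp g f = C.id p
  /-- A4: every morphism raising rank by more than one factors through the
  next level (hence, inductively, through all intermediate levels). -/
  factor : ∀ (p q : C.Obj) (f : C.Hom p q), C.rank p + 1 < C.rank q →
    ∃ (r : C.Obj) (g : C.Hom p r) (h : C.Hom r q),
      C.rank r = C.rank p + 1 ∧ C.comp g h = f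
  /-- A5: `Aut p` acts freely on `Hom p q` by precomposition when
  `rank q = rank p + 1`. -/
  free_pre : ∀ (p q : C.Obj), C.rank q = C.rank p + 1 →
    ∀ (α : C.Hom p p) (f : C.Hom p q), C.comp α f = f → α = C.id p
  /-- A5: `Aut q` acts freely on `Hom p q` by postcomposition when
  `rank q = rank p + 1`. -/
  free_post : ∀ (p q : C.Obj), C.rank q = C.rank p + 1 →
    ∀ (β : C.Hom q q) (f : C.Hom p q), C.comp f β = f → β = C.id q

/-- An updown category is unilateral if all automorphism groups are trivial. -/
def Unilateral (C : UpdownData) : Prop :=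
  ∀ (p : C.Obj) (f : C.Hom p p), f = C.id p

/-- An updown category is simple if there is at most one morphism between any
two objects and morphisms factor uniquely into rank-1 steps (so the object at
each intermediate rank in a factorization is unique). -/
def SimpleUD (C : UpdownData) : Prop :=
  (∀ p q : C.Obj, Subsingleton (C.Hom p q)) ∧
  (∀ (p q : C.Obj) (f : C.Hom p q) (k : ℕ), C.rank p < k → k < C.rank q →
    ∃! r : C.Obj, C.rank r = k ∧
      ∃ (g : C.Hom p r) (h : C.Hom r q), C.comp g h = f)

end UpdownData

/-! Up and down operators on the free vector space `Obj →₀ ℚ`. -/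

namespace UpdownData

variable (C : UpdownData)

/-- `u(p;p') = |Hom(p,p')|/|Aut(p')|` (as a rational number). -/
noncomputable def uQ (p q : C.Obj) : ℚ :=
  (Nat.card (C.Hom p q) : ℚ) / (Nat.card (C.Hom q q) : ℚ)

/-- `d(p;p') = |Hom(p,p')|/|Aut(p)|` (as a rational number). -/
noncomputable def dQ (p q : C.Obj) : ℚ :=
  (Nat.card (C.Hom p q) : ℚ) / (Nat.card (C.Hom p p) : ℚ)

/-- The free `ℚ`-vector space on the objects of `C`. -/
abbrev Vec := C.Obj →₀ ℚ

/-- `U(p) = Σ_{|p'| = |p|+1} u(p;p')·p'`. -/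
noncomputable def Uvec (p : C.Obj) : C.Vec :=
  ∑ q ∈ C.level (C.rank p + 1), C.uQ p q • Finsupp.single q 1

/-- `D(p) = Σ_{|p''| = |p|-1} d(p'';p)·p''`, and `D(0̂) = 0`. -/
noncomputable def Dvec (p : C.Obj) : C.Vec :=
  if C.rank p = 0 then 0
  else ∑ q ∈ C.level (C.rank p - 1), C.dQ q p • Finsupp.single q 1

/-- The up operator. -/
noncomputable def Uop : C.Vec →ₗ[ℚ] C.Vec :=
  Finsupp.lsum ℚ fun p => LinearMap.toSpanSingleton ℚ C.Vec (C.Uvec p)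

/-- The down operator. -/
noncomputable def Dop : C.Vec →ₗ[ℚ] C.Vec :=
  Finsupp.lsum ℚ fun p => LinearMap.toSpanSingleton ℚ C.Vec (C.Dvec p)

/-- The inner product with `⟨p,p⟩ = |Aut(p)|` on basis elements. -/
noncomputable def innerUD (x y : C.Vec) : ℚ :=
  x.sum fun p c => c * y p * (Nat.card (C.Hom p p) : ℚ)

/-- The commutator `DU - UD`. -/
noncomputable def commDU : C.Vec →ₗ[ℚ] C.Vec :=
  C.Dop ∘ₗ C.Uop - C.Uop ∘ₗ C.Dop

/-- Extended multiplicity `u(p;q)`: the coefficient of `q` in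
`U^{|q|-|p|}(p)`, i.e. `⟨U^{|q|-|p|}(p), q⟩ / |Aut q|`. -/
noncomputable def uext (p q : C.Obj) : ℚ :=
  ((C.Uop ^ (C.rank q - C.rank p)) (Finsupp.single p 1)) q

/-- Extended multiplicity `d(p;q)`: the coefficient of `p` in
`D^{|q|-|p|}(q)`. -/
noncomputable def dext (p q : C.Obj) : ℚ :=
  ((C.Dop ^ (C.rank q - C.rank p)) (Finsupp.single q 1)) p

/-- The weak commutation condition with eigenvalue function `ε`:
every object is an eigenvector of `DU - UD`. -/
def WCC (ε : C.Obj → ℚ) : Prop :=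
  ∀ p : C.Obj, C.commDU (Finsupp.single p 1) = ε p • Finsupp.single p 1

/-- The sequential commutation condition: `DU - UD` acts as the scalar `r i`
on rank `i`. -/
def SCC (r : ℕ → ℚ) : Prop :=
  ∀ p : C.Obj, C.commDU (Finsupp.single p 1) = r (C.rank p) • Finsupp.single p 1

end UpdownData

/-! The product of updown categories. -/

namespace UpdownData

open Classical in
/-- The product of two updown data: objects are pairs, hom-sets are products of
hom-sets, and the rank is the sum of the ranks. -/
noncomputable def prod (C D : UpdownData) : UpdownData where
  Obj := C.Obj × D.Obj
  Hom p q := C.Hom p.1 q.1 × D.Hom p.2 q.2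
  id p := (C.id p.1, D.id p.2)
  comp f g := (C.comp f.1 g.1, D.comp f.2 g.2)
  id_comp f := by cases f; simp [C.id_comp, D.id_comp]
  comp_id f := by cases f; simp [C.comp_id, D.comp_id]
  assoc f g h := by simp [C.assoc, D.assoc]
  rank p := C.rank p.1 + D.rank p.2
  level n := (Finset.range (n + 1)).biUnion fun i => C.level i ×ˢ D.level (n - i)
  zero := (C.zero, D.zero)

end UpdownData

open Finsupp LinearMap UpdownData

attribute [reducible] UpdownData.prod

namespace UpdownProd

lemma autQ_ne_zero {C : UpdownData} (hC : C.IsUpdownCat) (p : C.Obj) :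
    (Nat.card (C.Hom p p) : ℚ) ≠ 0 := by
  have : Finite (C.Hom p p) := hC.homFinite p p
  have : Nonempty (C.Hom p p) := ⟨C.id p⟩
  exact_mod_cast (Nat.card_pos).ne'

lemma card_hom_eq_zero {C : UpdownData} (hC : C.IsUpdownCat) {p q : C.Obj}
    (h1 : ¬ C.rank p < C.rank q) (h2 : p ≠ q) : Nat.card (C.Hom p q) = 0 := by
  have : IsEmpty (C.Hom p q) := ⟨fun f => (hC.hom_rank p q f).elim h1 h2⟩
  exact Nat.card_of_isEmpty

lemma mem_level_prod (C D : UpdownData) (n : ℕ) (x : C.Obj × D.Obj) :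
    x ∈ (C.prod D).level n ↔ ∃ i < n + 1, x.1 ∈ C.level i ∧ x.2 ∈ D.level (n - i) := by
  classical
  show x ∈ (Finset.range (n + 1)).biUnion (fun i => C.level i ×ˢ D.level (n - i)) ↔ _
  simp [Finset.mem_biUnion, Finset.mem_product]

lemma card_hom_prod (C D : UpdownData) (p q : C.Obj × D.Obj) :
    Nat.card ((C.prod D).Hom p q) = Nat.card (C.Hom p.1 q.1) * Nat.card (D.Hom p.2 q.2) := by
  show Nat.card (C.Hom p.1 q.1 × D.Hom p.2 q.2) = _
  exact Nat.card_prod _ _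

lemma uQ_prod_left {C D : UpdownData} (hD : D.IsUpdownCat) (c c' : C.Obj) (d : D.Obj) :
    (C.prod D).uQ (c, d) (c', d) = C.uQ c c' := by
  rw [uQ, uQ, card_hom_prod, card_hom_prod]
  push_cast
  exact mul_div_mul_right _ _ (autQ_ne_zero hD d)

lemma uQ_prod_right {C D : UpdownData} (hC : C.IsUpdownCat) (c : C.Obj) (d d' : D.Obj) :
    (C.prod D).uQ (c, d) (c, d') = D.uQ d d' := by
  rw [uQ, uQ, card_hom_prod, card_hom_prod]
  push_cast
  rw [mul_comm (Nat.card (C.Hom c c) : ℚ), mul_comm (Nat.card (C.Hom c c) : ℚ)]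
  exact mul_div_mul_right _ _ (autQ_ne_zero hC c)

lemma dQ_prod_left {C D : UpdownData} (hD : D.IsUpdownCat) (c c' : C.Obj) (d : D.Obj) :
    (C.prod D).dQ (c', d) (c, d) = C.dQ c' c := by
  rw [dQ, dQ, card_hom_prod, card_hom_prod]
  push_cast
  exact mul_div_mul_right _ _ (autQ_ne_zero hD d)

lemma dQ_prod_right {C D : UpdownData} (hC : C.IsUpdownCat) (c : C.Obj) (d d' : D.Obj) :
    (C.prod D).dQ (c, d') (c, d) = D.dQ d' d := by
  rw [dQ, dQ, card_hom_prod, card_hom_prod]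
  push_cast
  rw [mul_comm (Nat.card (C.Hom c c) : ℚ), mul_comm (Nat.card (C.Hom c c) : ℚ)]
  exact mul_div_mul_right _ _ (autQ_ne_zero hC c)

end UpdownProd
namespace UpdownProd
open Finsupp LinearMap UpdownData

lemma mapDomain_sum_levels {C : UpdownData} {β : Type} (g : C.Obj → β) (s : Finset C.Obj)
    (w : C.Obj → ℚ) :
    Finsupp.mapDomain g (∑ q ∈ s, w q • Finsupp.single q 1)
      = ∑ q ∈ s, w q • Finsupp.single (g q) (1:ℚ) := by
  rw [Finsupp.mapDomain_finset_sum]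
  exact Finset.sum_congr rfl fun q _ => by rw [Finsupp.mapDomain_smul, Finsupp.mapDomain_single]

lemma Uvec_prod {C D : UpdownData} (hC : C.IsUpdownCat) (hD : D.IsUpdownCat)
    (c : C.Obj) (d : D.Obj) :
    (C.prod D).Uvec (c, d)
      = Finsupp.mapDomain (fun c' => (c', d)) (C.Uvec c)
        + Finsupp.mapDomain (fun d' => (c, d')) (D.Uvec d) := by
  classical
  set n := C.rank c + D.rank d with hn
  set S1 : Finset (C.Obj × D.Obj) := C.level (C.rank c + 1) ×ˢ {d} with hS1
  set S2 : Finset (C.Obj × D.Obj) := {c} ×ˢ D.level (D.rank d + 1) with hS2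
  have hrank : ∀ {E : UpdownData} (hE : E.IsUpdownCat) (k : ℕ) (p : E.Obj),
      p ∈ E.level k → E.rank p = k := fun hE k p hp => (hE.mem_level k p).1 hp
  have hsub : S1 ∪ S2 ⊆ (C.prod D).level (n + 1) := by
    intro x hx
    rcases Finset.mem_union.1 hx with hx | hx
    · rcases Finset.mem_product.1 hx with ⟨h1, h2⟩
      rw [Finset.mem_singleton] at h2
      refine (mem_level_prod C D (n+1) x).2 ⟨C.rank c + 1, by omega, h1, ?_⟩
      have : n + 1 - (C.rank c + 1) = D.rank d := by omega
      rw [this, h2]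
      exact (hD.mem_level _ _).2 rfl
    · rcases Finset.mem_product.1 hx with ⟨h1, h2⟩
      rw [Finset.mem_singleton] at h1
      refine (mem_level_prod C D (n+1) x).2 ⟨C.rank c, by omega, ?_, ?_⟩
      · rw [h1]; exact (hC.mem_level _ _).2 rfl
      · have : n + 1 - C.rank c = D.rank d + 1 := by omega
        rw [this]; exact h2
  have hvan : ∀ x ∈ (C.prod D).level (n + 1), x ∉ S1 ∪ S2 →
      (C.prod D).uQ (c, d) x • Finsupp.single x (1:ℚ) = 0 := by
    intro x hx hxS
    simp only [Finset.mem_union, not_or] at hxS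
    obtain ⟨i, hi, h1, h2⟩ := (mem_level_prod C D (n+1) x).1 hx
    have hr1 : C.rank x.1 = i := hrank hC _ _ h1
    have hr2 : D.rank x.2 = n + 1 - i := hrank hD _ _ h2
    have hsum : C.rank x.1 + D.rank x.2 = n + 1 := by omega
    have hkey : Nat.card (C.Hom c x.1) = 0 ∨ Nat.card (D.Hom d x.2) = 0 := by
      by_contra hcon
      push_neg at hcon
      obtain ⟨f⟩ := (Nat.card_ne_zero.mp hcon.1).1
      obtain ⟨g⟩ := (Nat.card_ne_zero.mp hcon.2).1
      rcases hC.hom_rank _ _ f with hf | hf <;> rcases hD.hom_rank _ _ g with hg | hg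
      · omega
      · rw [← hg] at hsum
        refine hxS.1 (Finset.mem_product.2 ⟨?_, ?_⟩)
        · exact (hC.mem_level _ _).2 (by omega)
        · exact Finset.mem_singleton.2 hg.symm
      · rw [← hf] at hsum
        refine hxS.2 (Finset.mem_product.2 ⟨?_, ?_⟩)
        · exact Finset.mem_singleton.2 hf.symm
        · exact (hD.mem_level _ _).2 (by omega)
      · rw [← hf] at hsum; rw [← hg] at hsum; omega
    have h0 : (C.prod D).uQ (c, d) x = 0 := by
      rw [uQ, card_hom_prod]
      rcases hkey with h | h <;> rw [h] <;> simp
    rw [h0, zero_smul]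
  have hdisj : Disjoint S1 S2 := by
    rw [Finset.disjoint_left]
    intro x hx1 hx2
    rcases Finset.mem_product.1 hx1 with ⟨h1, _⟩
    rcases Finset.mem_product.1 hx2 with ⟨h1', _⟩
    rw [Finset.mem_singleton] at h1'
    have := hrank hC _ _ h1
    rw [h1'] at this
    omega
  calc (C.prod D).Uvec (c, d)
      = ∑ q ∈ S1 ∪ S2, (C.prod D).uQ (c, d) q • Finsupp.single q (1:ℚ) :=
        (Finset.sum_subset hsub hvan).symm
    _ = (∑ q ∈ S1, (C.prod D).uQ (c, d) q • Finsupp.single q (1:ℚ))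
        + ∑ q ∈ S2, (C.prod D).uQ (c, d) q • Finsupp.single q (1:ℚ) :=
        Finset.sum_union hdisj
    _ = _ := by
        congr 1
        · rw [hS1, Finset.sum_product, Uvec, mapDomain_sum_levels]
          refine Finset.sum_congr rfl fun c' _ => ?_
          rw [Finset.sum_singleton, uQ_prod_left hD]
        · rw [hS2, Finset.sum_product, Finset.sum_singleton, Uvec, mapDomain_sum_levels]
          exact Finset.sum_congr rfl fun d' _ => by rw [uQ_prod_right hC]

end UpdownProd
namespace UpdownProd
open Finsupp LinearMap UpdownData

lemma Dvec_prod {C D : UpdownData} (hC : C.IsUpdownCat) (hD : D.IsUpdownCat)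
    (c : C.Obj) (d : D.Obj) :
    (C.prod D).Dvec (c, d)
      = Finsupp.mapDomain (fun c' => (c', d)) (C.Dvec c)
        + Finsupp.mapDomain (fun d' => (c, d')) (D.Dvec d) := by
  classical
  set n := C.rank c + D.rank d with hn
  by_cases hn0 : n = 0
  · have hc0 : C.rank c = 0 := by omega
    have hd0 : D.rank d = 0 := by omega
    have hL : (C.prod D).Dvec (c, d) = 0 := by
      rw [Dvec, if_pos]; exact hn0
    have h1 : C.Dvec c = 0 := by rw [Dvec, if_pos hc0]
    have h2 : D.Dvec d = 0 := by rw [Dvec, if_pos hd0]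
    rw [hL, h1, h2, Finsupp.mapDomain_zero, Finsupp.mapDomain_zero, add_zero]
  · set T1 : Finset C.Obj := if C.rank c = 0 then ∅ else C.level (C.rank c - 1) with hT1
    set T2 : Finset D.Obj := if D.rank d = 0 then ∅ else D.level (D.rank d - 1) with hT2
    set S1 : Finset (C.Obj × D.Obj) := T1 ×ˢ {d} with hS1
    set S2 : Finset (C.Obj × D.Obj) := {c} ×ˢ T2 with hS2
    have hrank : ∀ {E : UpdownData} (hE : E.IsUpdownCat) (k : ℕ) (p : E.Obj),
        p ∈ E.level k → E.rank p = k := fun hE k p hp => (hE.mem_level k p).1 hp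
    have hT1mem : ∀ c'', c'' ∈ T1 → C.rank c'' + 1 = C.rank c := by
      intro c'' h
      by_cases h0 : C.rank c = 0
      · rw [hT1, if_pos h0] at h; exact absurd h (Finset.notMem_empty _)
      · rw [hT1, if_neg h0] at h
        have := hrank hC _ _ h
        omega
    have hT2mem : ∀ d'', d'' ∈ T2 → D.rank d'' + 1 = D.rank d := by
      intro d'' h
      by_cases h0 : D.rank d = 0
      · rw [hT2, if_pos h0] at h; exact absurd h (Finset.notMem_empty _)
      · rw [hT2, if_neg h0] at h
        have := hrank hD _ _ h
        omega
    have hT1in : ∀ c'', C.rank c'' + 1 = C.rank c → c'' ∈ T1 := by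
      intro c'' h
      rw [hT1, if_neg (by omega)]
      exact (hC.mem_level _ _).2 (by omega)
    have hT2in : ∀ d'', D.rank d'' + 1 = D.rank d → d'' ∈ T2 := by
      intro d'' h
      rw [hT2, if_neg (by omega)]
      exact (hD.mem_level _ _).2 (by omega)
    have hsub : S1 ∪ S2 ⊆ (C.prod D).level (n - 1) := by
      intro x hx
      rcases Finset.mem_union.1 hx with hx | hx
      · rcases Finset.mem_product.1 hx with ⟨h1, h2⟩
        rw [Finset.mem_singleton] at h2
        have hr := hT1mem _ h1
        refine (mem_level_prod C D (n-1) x).2 ⟨C.rank x.1, by omega, (hC.mem_level _ _).2 rfl, ?_⟩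
        have : n - 1 - C.rank x.1 = D.rank d := by omega
        rw [this, h2]
        exact (hD.mem_level _ _).2 rfl
      · rcases Finset.mem_product.1 hx with ⟨h1, h2⟩
        rw [Finset.mem_singleton] at h1
        have hr := hT2mem _ h2
        refine (mem_level_prod C D (n-1) x).2 ⟨C.rank c, by omega, ?_, ?_⟩
        · rw [h1]; exact (hC.mem_level _ _).2 rfl
        · have : n - 1 - C.rank c = D.rank x.2 := by omega
          rw [this]
          exact (hD.mem_level _ _).2 rfl
    have hvan : ∀ x ∈ (C.prod D).level (n - 1), x ∉ S1 ∪ S2 →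
        (C.prod D).dQ x (c, d) • Finsupp.single x (1:ℚ) = 0 := by
      intro x hx hxS
      simp only [Finset.mem_union, not_or] at hxS
      obtain ⟨i, hi, h1, h2⟩ := (mem_level_prod C D (n-1) x).1 hx
      have hr1 : C.rank x.1 = i := hrank hC _ _ h1
      have hr2 : D.rank x.2 = n - 1 - i := hrank hD _ _ h2
      have hsum : C.rank x.1 + D.rank x.2 = n - 1 := by omega
      have hkey : Nat.card (C.Hom x.1 c) = 0 ∨ Nat.card (D.Hom x.2 d) = 0 := by
        by_contra hcon
        push_neg at hcon
        obtain ⟨f⟩ := (Nat.card_ne_zero.mp hcon.1).1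
        obtain ⟨g⟩ := (Nat.card_ne_zero.mp hcon.2).1
        rcases hC.hom_rank _ _ f with hf | hf <;> rcases hD.hom_rank _ _ g with hg | hg
        · omega
        · rw [hg] at hsum
          refine hxS.1 (Finset.mem_product.2 ⟨hT1in _ (by omega), Finset.mem_singleton.2 hg⟩)
        · rw [hf] at hsum
          refine hxS.2 (Finset.mem_product.2 ⟨Finset.mem_singleton.2 hf, hT2in _ (by omega)⟩)
        · rw [hf, hg] at hsum; omega
      have h0 : (C.prod D).dQ x (c, d) = 0 := by
        rw [dQ, card_hom_prod]
        rcases hkey with h | h <;> rw [h] <;> simp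
      rw [h0, zero_smul]
    have hdisj : Disjoint S1 S2 := by
      rw [Finset.disjoint_left]
      intro x hx1 hx2
      rcases Finset.mem_product.1 hx1 with ⟨h1, _⟩
      rcases Finset.mem_product.1 hx2 with ⟨h1', _⟩
      rw [Finset.mem_singleton] at h1'
      have := hT1mem _ h1
      rw [h1'] at this
      omega
    have hL : (C.prod D).Dvec (c, d)
        = ∑ q ∈ (C.prod D).level (n - 1), (C.prod D).dQ q (c, d) • Finsupp.single q (1:ℚ) := by
      rw [Dvec, if_neg]
      · exact hn0
    calc (C.prod D).Dvec (c, d)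
        = ∑ q ∈ S1 ∪ S2, (C.prod D).dQ q (c, d) • Finsupp.single q (1:ℚ) := by
          rw [hL]; exact (Finset.sum_subset hsub hvan).symm
      _ = (∑ q ∈ S1, (C.prod D).dQ q (c, d) • Finsupp.single q (1:ℚ))
          + ∑ q ∈ S2, (C.prod D).dQ q (c, d) • Finsupp.single q (1:ℚ) :=
          Finset.sum_union hdisj
      _ = _ := by
          congr 1
          · by_cases h0 : C.rank c = 0
            · rw [Dvec, if_pos h0, Finsupp.mapDomain_zero, hS1, hT1, if_pos h0,
                Finset.empty_product, Finset.sum_empty]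
            · rw [hS1, hT1, if_neg h0, Finset.sum_product, Dvec, if_neg h0, mapDomain_sum_levels]
              refine Finset.sum_congr rfl fun c' _ => ?_
              rw [Finset.sum_singleton, dQ_prod_left hD]
          · by_cases h0 : D.rank d = 0
            · rw [Dvec, if_pos h0, Finsupp.mapDomain_zero, hS2, hT2, if_pos h0,
                Finset.product_empty, Finset.sum_empty]
            · rw [hS2, hT2, if_neg h0, Finset.sum_product, Finset.sum_singleton, Dvec, if_neg h0,
                mapDomain_sum_levels]
              exact Finset.sum_congr rfl fun d' _ => by rw [dQ_prod_right hC]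

end UpdownProd
namespace UpdownProd
open Finsupp LinearMap UpdownData

noncomputable def pU1 (C D : UpdownData) : (C.prod D).Vec →ₗ[ℚ] (C.prod D).Vec :=
  Finsupp.lsum ℚ fun p : C.Obj × D.Obj =>
    LinearMap.toSpanSingleton ℚ (C.prod D).Vec
      (Finsupp.mapDomain (fun c' => (c', p.2)) (C.Uvec p.1))

noncomputable def pU2 (C D : UpdownData) : (C.prod D).Vec →ₗ[ℚ] (C.prod D).Vec :=
  Finsupp.lsum ℚ fun p : C.Obj × D.Obj =>
    LinearMap.toSpanSingleton ℚ (C.prod D).Vec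
      (Finsupp.mapDomain (fun d' => (p.1, d')) (D.Uvec p.2))

noncomputable def pD1 (C D : UpdownData) : (C.prod D).Vec →ₗ[ℚ] (C.prod D).Vec :=
  Finsupp.lsum ℚ fun p : C.Obj × D.Obj =>
    LinearMap.toSpanSingleton ℚ (C.prod D).Vec
      (Finsupp.mapDomain (fun c' => (c', p.2)) (C.Dvec p.1))

noncomputable def pD2 (C D : UpdownData) : (C.prod D).Vec →ₗ[ℚ] (C.prod D).Vec :=
  Finsupp.lsum ℚ fun p : C.Obj × D.Obj =>
    LinearMap.toSpanSingleton ℚ (C.prod D).Vec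
      (Finsupp.mapDomain (fun d' => (p.1, d')) (D.Dvec p.2))

variable {C D : UpdownData}

lemma pU1_single (c : C.Obj) (d : D.Obj) (b : ℚ) :
    pU1 C D ((Finsupp.single (c, d) b : (C.Obj × D.Obj) →₀ ℚ)) = b • Finsupp.mapDomain (fun c' => (c', d)) (C.Uvec c) := by
  rw [pU1, Finsupp.lsum_single, LinearMap.toSpanSingleton_apply]

lemma pU2_single (c : C.Obj) (d : D.Obj) (b : ℚ) :
    pU2 C D ((Finsupp.single (c, d) b : (C.Obj × D.Obj) →₀ ℚ)) = b • Finsupp.mapDomain (fun d' => (c, d')) (D.Uvec d) := by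
  rw [pU2, Finsupp.lsum_single, LinearMap.toSpanSingleton_apply]

lemma pD1_single (c : C.Obj) (d : D.Obj) (b : ℚ) :
    pD1 C D ((Finsupp.single (c, d) b : (C.Obj × D.Obj) →₀ ℚ)) = b • Finsupp.mapDomain (fun c' => (c', d)) (C.Dvec c) := by
  rw [pD1, Finsupp.lsum_single, LinearMap.toSpanSingleton_apply]

lemma pD2_single (c : C.Obj) (d : D.Obj) (b : ℚ) :
    pD2 C D ((Finsupp.single (c, d) b : (C.Obj × D.Obj) →₀ ℚ)) = b • Finsupp.mapDomain (fun d' => (c, d')) (D.Dvec d) := by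
  rw [pD2, Finsupp.lsum_single, LinearMap.toSpanSingleton_apply]

lemma Uop_single (E : UpdownData) (p : E.Obj) (b : ℚ) :
    E.Uop (Finsupp.single p b) = b • E.Uvec p := by
  rw [Uop, Finsupp.lsum_single, LinearMap.toSpanSingleton_apply]

lemma Dop_single (E : UpdownData) (p : E.Obj) (b : ℚ) :
    E.Dop (Finsupp.single p b) = b • E.Dvec p := by
  rw [Dop, Finsupp.lsum_single, LinearMap.toSpanSingleton_apply]

lemma pU1_mapDomain (d : D.Obj) (x : C.Vec) :
    pU1 C D (Finsupp.mapDomain (fun c' => (c', d)) x)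
      = Finsupp.mapDomain (fun c' => (c', d)) (C.Uop x) := by
  induction x using Finsupp.induction_linear with
  | zero => simp
  | add f g hf hg => rw [Finsupp.mapDomain_add, map_add, hf, hg, map_add, Finsupp.mapDomain_add]
  | single c b =>
      rw [Finsupp.mapDomain_single, pU1_single, Uop_single, Finsupp.mapDomain_smul]

lemma pD1_mapDomain (d : D.Obj) (x : C.Vec) :
    pD1 C D (Finsupp.mapDomain (fun c' => (c', d)) x)
      = Finsupp.mapDomain (fun c' => (c', d)) (C.Dop x) := by
  induction x using Finsupp.induction_linear with
  | zero => simp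
  | add f g hf hg => rw [Finsupp.mapDomain_add, map_add, hf, hg, map_add, Finsupp.mapDomain_add]
  | single c b =>
      rw [Finsupp.mapDomain_single, pD1_single, Dop_single, Finsupp.mapDomain_smul]

lemma pU2_mapDomain (c : C.Obj) (y : D.Vec) :
    pU2 C D (Finsupp.mapDomain (fun d' => (c, d')) y)
      = Finsupp.mapDomain (fun d' => (c, d')) (D.Uop y) := by
  induction y using Finsupp.induction_linear with
  | zero => simp
  | add f g hf hg => rw [Finsupp.mapDomain_add, map_add, hf, hg, map_add, Finsupp.mapDomain_add]
  | single d b =>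
      rw [Finsupp.mapDomain_single, pU2_single, Uop_single, Finsupp.mapDomain_smul]

lemma pD2_mapDomain (c : C.Obj) (y : D.Vec) :
    pD2 C D (Finsupp.mapDomain (fun d' => (c, d')) y)
      = Finsupp.mapDomain (fun d' => (c, d')) (D.Dop y) := by
  induction y using Finsupp.induction_linear with
  | zero => simp
  | add f g hf hg => rw [Finsupp.mapDomain_add, map_add, hf, hg, map_add, Finsupp.mapDomain_add]
  | single d b =>
      rw [Finsupp.mapDomain_single, pD2_single, Dop_single, Finsupp.mapDomain_smul]

lemma Uop_prod_eq (hC : C.IsUpdownCat) (hD : D.IsUpdownCat) :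
    (C.prod D).Uop = pU1 C D + pU2 C D := by
  apply Finsupp.lhom_ext
  intro a b
  obtain ⟨c, d⟩ := a
  rw [LinearMap.add_apply, Uop_single, Uvec_prod hC hD, smul_add, pU1_single, pU2_single]

lemma Dop_prod_eq (hC : C.IsUpdownCat) (hD : D.IsUpdownCat) :
    (C.prod D).Dop = pD1 C D + pD2 C D := by
  apply Finsupp.lhom_ext
  intro a b
  obtain ⟨c, d⟩ := a
  rw [LinearMap.add_apply, Dop_single, Dvec_prod hC hD, smul_add, pD1_single, pD2_single]

end UpdownProd
namespace UpdownProd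
open Finsupp LinearMap UpdownData

variable {C D : UpdownData}

lemma cross12 (c : C.Obj) (d : D.Obj) :
    pD1 C D (pU2 C D ((Finsupp.single (c, d) 1 : (C.Obj × D.Obj) →₀ ℚ)))
      = pU2 C D (pD1 C D ((Finsupp.single (c, d) 1 : (C.Obj × D.Obj) →₀ ℚ))) := by
  rw [pU2_single, one_smul, pD1_single, one_smul]
  rw [show D.Uvec d = ∑ q ∈ D.level (D.rank d + 1), D.uQ d q • Finsupp.single q 1 from rfl]
  rw [mapDomain_sum_levels, map_sum]
  simp only [map_smul, pD1_single, one_smul]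
  by_cases h0 : C.rank c = 0
  · rw [show C.Dvec c = 0 from by rw [Dvec, if_pos h0]]
    simp
  · rw [show C.Dvec c = ∑ q ∈ C.level (C.rank c - 1), C.dQ q c • Finsupp.single q 1 from
      by rw [Dvec, if_neg h0]]
    rw [mapDomain_sum_levels, map_sum]
    simp only [map_smul, pU2_single, one_smul]
    simp only [show D.Uvec d = ∑ q ∈ D.level (D.rank d + 1), D.uQ d q • Finsupp.single q 1 from
      rfl]
    simp only [mapDomain_sum_levels, Finset.smul_sum, smul_smul]
    rw [Finset.sum_comm]
    exact Finset.sum_congr rfl fun _ _ => Finset.sum_congr rfl fun _ _ => by rw [mul_comm]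

lemma cross21 (c : C.Obj) (d : D.Obj) :
    pD2 C D (pU1 C D ((Finsupp.single (c, d) 1 : (C.Obj × D.Obj) →₀ ℚ)))
      = pU1 C D (pD2 C D ((Finsupp.single (c, d) 1 : (C.Obj × D.Obj) →₀ ℚ))) := by
  rw [pU1_single, one_smul, pD2_single, one_smul]
  rw [show C.Uvec c = ∑ q ∈ C.level (C.rank c + 1), C.uQ c q • Finsupp.single q 1 from rfl]
  rw [mapDomain_sum_levels, map_sum]
  simp only [map_smul, pD2_single, one_smul]
  by_cases h0 : D.rank d = 0
  · rw [show D.Dvec d = 0 from by rw [Dvec, if_pos h0]]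
    simp
  · rw [show D.Dvec d = ∑ q ∈ D.level (D.rank d - 1), D.dQ q d • Finsupp.single q 1 from
      by rw [Dvec, if_neg h0]]
    rw [mapDomain_sum_levels, map_sum]
    simp only [map_smul, pU1_single, one_smul]
    simp only [show C.Uvec c = ∑ q ∈ C.level (C.rank c + 1), C.uQ c q • Finsupp.single q 1 from
      rfl]
    simp only [mapDomain_sum_levels, Finset.smul_sum, smul_smul]
    rw [Finset.sum_comm]
    exact Finset.sum_congr rfl fun _ _ => Finset.sum_congr rfl fun _ _ => by rw [mul_comm]

lemma diag1 {εC : C.Obj → ℚ} (h1 : C.WCC εC) (c : C.Obj) (d : D.Obj) :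
    pD1 C D (pU1 C D ((Finsupp.single (c, d) 1 : (C.Obj × D.Obj) →₀ ℚ)))
      - pU1 C D (pD1 C D ((Finsupp.single (c, d) 1 : (C.Obj × D.Obj) →₀ ℚ)))
      = εC c • (Finsupp.single (c, d) 1 : (C.Obj × D.Obj) →₀ ℚ) := by
  have hc := h1 c
  rw [commDU, LinearMap.sub_apply, LinearMap.comp_apply, LinearMap.comp_apply] at hc
  have e1 : pU1 C D ((Finsupp.single (c, d) 1 : (C.Obj × D.Obj) →₀ ℚ))
      = Finsupp.mapDomain (fun c' => (c', d)) (C.Uop (Finsupp.single c 1)) := by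
    rw [pU1_single, one_smul, Uop_single, one_smul]
  have e2 : pD1 C D ((Finsupp.single (c, d) 1 : (C.Obj × D.Obj) →₀ ℚ))
      = Finsupp.mapDomain (fun c' => (c', d)) (C.Dop (Finsupp.single c 1)) := by
    rw [pD1_single, one_smul, Dop_single, one_smul]
  rw [e1, e2, pD1_mapDomain, pU1_mapDomain]
  have := map_sub (Finsupp.lmapDomain ℚ ℚ (fun c' => (c', d)))
    (C.Dop (C.Uop (Finsupp.single c 1))) (C.Uop (C.Dop (Finsupp.single c 1)))
  simp only [Finsupp.lmapDomain_apply] at this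
  rw [← this, hc, Finsupp.mapDomain_smul, Finsupp.mapDomain_single]

lemma diag2 {εD : D.Obj → ℚ} (h2 : D.WCC εD) (c : C.Obj) (d : D.Obj) :
    pD2 C D (pU2 C D ((Finsupp.single (c, d) 1 : (C.Obj × D.Obj) →₀ ℚ)))
      - pU2 C D (pD2 C D ((Finsupp.single (c, d) 1 : (C.Obj × D.Obj) →₀ ℚ)))
      = εD d • (Finsupp.single (c, d) 1 : (C.Obj × D.Obj) →₀ ℚ) := by
  have hd := h2 d
  rw [commDU, LinearMap.sub_apply, LinearMap.comp_apply, LinearMap.comp_apply] at hd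
  have e1 : pU2 C D ((Finsupp.single (c, d) 1 : (C.Obj × D.Obj) →₀ ℚ))
      = Finsupp.mapDomain (fun d' => (c, d')) (D.Uop (Finsupp.single d 1)) := by
    rw [pU2_single, one_smul, Uop_single, one_smul]
  have e2 : pD2 C D ((Finsupp.single (c, d) 1 : (C.Obj × D.Obj) →₀ ℚ))
      = Finsupp.mapDomain (fun d' => (c, d')) (D.Dop (Finsupp.single d 1)) := by
    rw [pD2_single, one_smul, Dop_single, one_smul]
  rw [e1, e2, pD2_mapDomain, pU2_mapDomain]
  have := map_sub (Finsupp.lmapDomain ℚ ℚ (fun d' => (c, d')))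
    (D.Dop (D.Uop (Finsupp.single d 1))) (D.Uop (D.Dop (Finsupp.single d 1)))
  simp only [Finsupp.lmapDomain_apply] at this
  rw [← this, hd, Finsupp.mapDomain_smul, Finsupp.mapDomain_single]

lemma mainWCC (hC : C.IsUpdownCat) (hD : D.IsUpdownCat) {εC : C.Obj → ℚ} {εD : D.Obj → ℚ}
    (h1 : C.WCC εC) (h2 : D.WCC εD) :
    (C.prod D).WCC fun x => εC x.1 + εD x.2 := by
  intro p
  obtain ⟨c, d⟩ := p
  show (C.prod D).commDU (Finsupp.single ((c, d) : C.Obj × D.Obj) 1)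
      = (εC c + εD d) • (Finsupp.single ((c, d) : C.Obj × D.Obj) 1 : (C.Obj × D.Obj) →₀ ℚ)
  rw [commDU, LinearMap.sub_apply, LinearMap.comp_apply, LinearMap.comp_apply,
    Uop_prod_eq hC hD, Dop_prod_eq hC hD]
  simp only [LinearMap.add_apply, map_add]
  rw [cross12, cross21]
  have hre :
      pD1 C D (pU1 C D ((Finsupp.single (c, d) 1 : (C.Obj × D.Obj) →₀ ℚ)))
        + pU1 C D (pD2 C D ((Finsupp.single (c, d) 1 : (C.Obj × D.Obj) →₀ ℚ)))
        + (pU2 C D (pD1 C D ((Finsupp.single (c, d) 1 : (C.Obj × D.Obj) →₀ ℚ)))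
            + pD2 C D (pU2 C D ((Finsupp.single (c, d) 1 : (C.Obj × D.Obj) →₀ ℚ))))
        - (pU1 C D (pD1 C D ((Finsupp.single (c, d) 1 : (C.Obj × D.Obj) →₀ ℚ)))
            + pU2 C D (pD1 C D ((Finsupp.single (c, d) 1 : (C.Obj × D.Obj) →₀ ℚ)))
            + (pU1 C D (pD2 C D ((Finsupp.single (c, d) 1 : (C.Obj × D.Obj) →₀ ℚ)))
                + pU2 C D (pD2 C D ((Finsupp.single (c, d) 1 : (C.Obj × D.Obj) →₀ ℚ)))))
      = (pD1 C D (pU1 C D ((Finsupp.single (c, d) 1 : (C.Obj × D.Obj) →₀ ℚ)))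
          - pU1 C D (pD1 C D ((Finsupp.single (c, d) 1 : (C.Obj × D.Obj) →₀ ℚ))))
        + (pD2 C D (pU2 C D ((Finsupp.single (c, d) 1 : (C.Obj × D.Obj) →₀ ℚ)))
          - pU2 C D (pD2 C D ((Finsupp.single (c, d) 1 : (C.Obj × D.Obj) →₀ ℚ)))) := by
    abel
  rw [hre, diag1 h1, diag2 h2, ← add_smul]

end UpdownProd
open UpdownData in
/-- products preserve the weak commutation condition with
`ε(c,d) = ε_C(c) + ε_D(d)`; in particular the absolute commutation condition
(with constants adding) and the linear commutation condition with a fixed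
slope are preserved. -/
theorem updown_prod_commutation (C D : UpdownData)
    (hC : C.IsUpdownCat) (hD : D.IsUpdownCat) :
    (∀ (εC : C.Obj → ℚ) (εD : D.Obj → ℚ), C.WCC εC → D.WCC εD →
      (UpdownData.prod C D).WCC fun x => εC x.1 + εD x.2) ∧
    (∀ r s : ℚ, C.WCC (fun _ => r) → D.WCC (fun _ => s) →
      (UpdownData.prod C D).WCC fun _ => r + s) ∧
    (∀ a bC bD : ℚ,
      C.WCC (fun c => a * (C.rank c : ℚ) + bC) →
      D.WCC (fun d => a * (D.rank d : ℚ) + bD) →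
      (UpdownData.prod C D).WCC
        fun x => a * ((UpdownData.prod C D).rank x : ℚ) + (bC + bD)) := by
  refine ⟨fun εC εD h1 h2 => UpdownProd.mainWCC hC hD h1 h2,
    fun r s h1 h2 => UpdownProd.mainWCC hC hD h1 h2,
    fun a bC bD h1 h2 => ?_⟩
  intro p
  have h := UpdownProd.mainWCC hC hD h1 h2 p
  have hcast : (((UpdownData.prod C D).rank p : ℚ)) = (C.rank p.1 : ℚ) + (D.rank p.2 : ℚ) := by
    have : (UpdownData.prod C D).rank p = C.rank p.1 + D.rank p.2 := rfl
    rw [this]; push_cast; ring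
  have hr : (a * ((UpdownData.prod C D).rank p : ℚ) + (bC + bD))
      = (a * (C.rank p.1 : ℚ) + bC) + (a * (D.rank p.2 : ℚ) + bD) := by
    rw [hcast]; ring
  show (UpdownData.prod C D).commDU (Finsupp.single p 1)
      = (a * ((UpdownData.prod C D).rank p : ℚ) + (bC + bD)) • Finsupp.single p 1
  rw [hr]
  exact h
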